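/- Let $m = \Theta(n)$ balls be placed independently and uniformly at random into $n$ bins, and let $\mu = m/n$. For any $x > 1$ and $k \ge 1$, with probability $1 - 2^{-\Omega(k)}$, there is no $i \in [n]$ such that the first $i$ bins contain at least $(1 + 1/x) i \mu + kx$ balls. -/

import Mathlib

open scoped Classical

/-- Number of balls (out of `m`) falling into the first `i` bins. -/
noncomputable def ballsInPrefix {m n : ℕ} (ω : Fin m → Fin n) (i : ℕ) : ℕ :=
  (Finset.univ.filter (fun b => (ω b : ℕ) < i)).card

noncomputable def firstBad (n m : ℕ) (x k : ℝ) (ω : Fin m → Fin n) : ℕ :=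
  if h : ∃ i : ℕ, 1 ≤ i ∧ i ≤ n ∧ (1 + 1 / x) * i * ((m : ℝ) / n) + k * x ≤ ballsInPrefix ω i
  then Nat.find h else 0

noncomputable def keyfun (n m : ℕ) (x k : ℝ) (ω : Fin m → Fin n) : ℕ × (Fin m → ℕ) :=
  (firstBad n m x k ω, fun b => if (ω b : ℕ) < firstBad n m x k ω then (ω b : ℕ) else n)

lemma card_filter_val_lt {n : ℕ} {i : ℕ} (hi : i ≤ n) :
    (Finset.univ.filter (fun j : Fin n => (j : ℕ) < i)).card = i := by
  have h : (Finset.univ.filter (fun j : Fin n => (j : ℕ) < i))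
      = Finset.univ.map (Fin.castLEEmb hi) := by
    ext j
    simp only [Finset.mem_filter, Finset.mem_univ, true_and, Finset.mem_map]
    constructor
    · intro hj
      exact ⟨⟨(j : ℕ), hj⟩, by simp⟩
    · rintro ⟨a, -, rfl⟩
      exact a.isLt
  rw [h, Finset.card_map, Finset.card_univ, Fintype.card_fin]

lemma prefix_eq_of_profile {n m : ℕ} {i : ℕ} (hin : i ≤ n) {ω ω₀ : Fin m → Fin n}
    (h : ∀ b, (if (ω b : ℕ) < i then (ω b : ℕ) else n) = (if (ω₀ b : ℕ) < i then (ω₀ b : ℕ) else n)) :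
    ∀ j ≤ i, ballsInPrefix ω j = ballsInPrefix ω₀ j := by
  intro j hj
  unfold ballsInPrefix
  congr 1
  apply Finset.filter_congr
  intro b _
  have hb := h b
  have h1 : (ω b : ℕ) < n := (ω b).isLt
  have h2 : (ω₀ b : ℕ) < n := (ω₀ b).isLt
  split_ifs at hb <;> omega

lemma tb_singleton {n : ℕ} {i : ℕ} (hin : i ≤ n) (v : Fin n) (hv : (v : ℕ) < i) :
    Finset.univ.filter (fun j : Fin n => (if (j : ℕ) < i then (j : ℕ) else n) = (v : ℕ)) = {v} := by
  ext j
  simp only [Finset.mem_filter, Finset.mem_univ, true_and, Finset.mem_singleton]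
  have h1 : (j : ℕ) < n := j.isLt
  have h2 : (v : ℕ) < n := v.isLt
  constructor
  · intro hj
    split_ifs at hj with h
    · exact Fin.ext hj
    · omega
  · rintro rfl
    rw [if_pos hv]

lemma tb_notlt {n : ℕ} {i : ℕ} (hin : i ≤ n) :
    Finset.univ.filter (fun j : Fin n => (if (j : ℕ) < i then (j : ℕ) else n) = n)
      = Finset.univ.filter (fun j : Fin n => ¬ (j : ℕ) < i) := by
  apply Finset.filter_congr
  intro j _
  have h1 : (j : ℕ) < n := j.isLt
  split_ifs with h
  · constructor <;> intro <;> omega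
  · constructor <;> intro <;> [omega; rfl]

lemma fiber_eq_piFinset {n m : ℕ} (x k : ℝ) (p : ℕ × (Fin m → ℕ)) (ω₀ : Fin m → Fin n)
    (hω₀ : ∃ i : ℕ, 1 ≤ i ∧ i ≤ n ∧ (1 + 1 / x) * i * ((m : ℝ) / n) + k * x ≤ ballsInPrefix ω₀ i)
    (hg : keyfun n m x k ω₀ = p) :
    (Finset.univ.filter (fun ω : Fin m → Fin n =>
        ∃ i : ℕ, 1 ≤ i ∧ i ≤ n ∧ (1 + 1 / x) * i * ((m : ℝ) / n) + k * x ≤ ballsInPrefix ω i)).filter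
      (fun ω => keyfun n m x k ω = p)
    = Fintype.piFinset (fun b =>
        Finset.univ.filter (fun j : Fin n => (if (j : ℕ) < p.1 then (j : ℕ) else n) = p.2 b)) := by
  have hfb : firstBad n m x k ω₀ = Nat.find hω₀ := by
    unfold firstBad
    rw [dif_pos hω₀]
  have hp1 : p.1 = Nat.find hω₀ := by rw [← hg]; exact hfb
  have hp2 : ∀ b, p.2 b = if (ω₀ b : ℕ) < p.1 then (ω₀ b : ℕ) else n := by
    intro b
    conv_lhs => rw [← hg]
    simp only [keyfun]
    rw [hfb, ← hp1]
  obtain ⟨hi1, hiN, hsi⟩ := Nat.find_spec hω₀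
  rw [← hp1] at hi1 hiN hsi
  have hmin : ∀ j < p.1, ¬ (1 ≤ j ∧ j ≤ n ∧ (1 + 1 / x) * j * ((m : ℝ) / n) + k * x ≤ ballsInPrefix ω₀ j) := by
    intro j hj
    have := Nat.find_min hω₀ (by omega : j < Nat.find hω₀)
    exact this
  ext ω
  simp only [Fintype.mem_piFinset, Finset.mem_filter, Finset.mem_univ, true_and]
  constructor
  · rintro ⟨hBad, hkey⟩ b
    have h1 : firstBad n m x k ω = p.1 := by rw [← hkey]; rfl
    have h2 : (if (ω b : ℕ) < firstBad n m x k ω then (ω b : ℕ) else n) = p.2 b := by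
      rw [← hkey]; rfl
    rw [h1] at h2
    exact h2
  · intro hco
    have hprof : ∀ b, (if (ω b : ℕ) < p.1 then (ω b : ℕ) else n)
        = (if (ω₀ b : ℕ) < p.1 then (ω₀ b : ℕ) else n) := by
      intro b
      rw [hco b, hp2 b]
    have hpre := prefix_eq_of_profile hiN hprof
    have hPω : 1 ≤ p.1 ∧ p.1 ≤ n ∧ (1 + 1 / x) * p.1 * ((m : ℝ) / n) + k * x ≤ ballsInPrefix ω p.1 :=
      ⟨hi1, hiN, by rw [hpre p.1 le_rfl]; exact hsi⟩
    have hex : ∃ i : ℕ, 1 ≤ i ∧ i ≤ n ∧ (1 + 1 / x) * i * ((m : ℝ) / n) + k * x ≤ ballsInPrefix ω i :=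
      ⟨p.1, hPω⟩
    have hfω : firstBad n m x k ω = p.1 := by
      unfold firstBad
      rw [dif_pos hex]
      rw [Nat.find_eq_iff hex]
      refine ⟨hPω, fun j hj hPj => ?_⟩
      obtain ⟨hj1, hjn, hjs⟩ := hPj
      exact hmin j hj ⟨hj1, hjn, by rw [← hpre j (le_of_lt hj)]; exact hjs⟩
    refine ⟨hex, ?_⟩
    unfold keyfun
    rw [hfω]
    exact Prod.ext rfl (funext hco)


lemma ixn_bound {x k M N I : ℝ} (hx : 1 < x) (hk : 1 ≤ k)
    (hM : 0 < M) (hN : 0 < N) (hI : 0 ≤ I)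
    (hTm : (1 + 1/x) * I * (M/N) + k * x ≤ M) : I * (x+1) < N * x := by
  have hx0 : (0:ℝ) < x := by linarith
  have hkx : 0 < k * x := by nlinarith
  have h1 : (1 + 1/x) * I * (M/N) < M := by linarith
  have hMN : 0 < M / N := div_pos hM hN
  have h2 : (1 + 1/x) * I < N := by
    by_contra hc
    push_neg at hc
    have : N * (M/N) ≤ (1 + 1/x) * I * (M/N) :=
      mul_le_mul_of_nonneg_right hc (le_of_lt hMN)
    rw [mul_div_cancel₀ _ (ne_of_gt hN)] at this
    linarith
  have h3 : (1 + 1/x) * x = x + 1 := by field_simp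
  calc I * (x+1) = ((1+1/x) * I) * x := by rw [mul_comm I (x+1), ← h3]; ring
    _ < N * x := by nlinarith

set_option maxHeartbeats 1000000 in
lemma key_ineq {x k M N I : ℝ} (hx : 1 < x) (hk : 1 ≤ k)
    (hI : 1 ≤ I) (hN : 0 < N) (hM : 0 < M)
    (hTm : (1 + 1/x) * I * (M/N) + k * x ≤ M) :
    k/3 ≤ ((1 + 1/x) * I * (M/N) + k * x) * Real.log (1 + 1/(2*x))
        + (M - ((1 + 1/x) * I * (M/N) + k * x)) * Real.log ((N - I*(1 + 1/(2*x)))/(N - I)) := by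
  have hx0 : (0:ℝ) < x := by linarith
  have hI0 : (0:ℝ) < I := by linarith
  have hixn : I * (x+1) < N * x := ixn_bound hx hk hM hN (le_of_lt hI0) hTm
  have hIN : I < N := by nlinarith
  have hw1 : (1:ℝ) < 1 + 1/(2*x) := by
    have : 0 < 1/(2*x) := by positivity
    linarith
  have hAnum : 0 < N - I*(1 + 1/(2*x)) := by
    have h1 : I < x * (N - I) := by nlinarith
    have h2 : I/(2*x) < (N - I)/2 := by
      rw [div_lt_div_iff₀ (by positivity) (by norm_num)]
      nlinarith
    have h3 : I * (1 + 1/(2*x)) = I + I/(2*x) := by ring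
    rw [h3]; linarith
  have hd0 : 0 < 2*x*(N - I) - I := by nlinarith
  have hA0 : 0 < (N - I*(1 + 1/(2*x)))/(N - I) := div_pos hAnum (by linarith)
  have hL1 : 1/(2*x+1) ≤ Real.log (1 + 1/(2*x)) := by
    have h := Real.log_le_sub_one_of_pos (show (0:ℝ) < (1 + 1/(2*x))⁻¹ by positivity)
    rw [Real.log_inv] at h
    have he : 1 - (1 + 1/(2*x))⁻¹ = 1/(2*x+1) := by
      field_simp
      ring
    linarith [he, h]
  have hL2 : -(I/(2*x*(N - I) - I)) ≤ Real.log ((N - I*(1 + 1/(2*x)))/(N - I)) := by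
    have h := Real.log_le_sub_one_of_pos (show (0:ℝ) < ((N - I*(1 + 1/(2*x)))/(N - I))⁻¹ by positivity)
    rw [Real.log_inv] at h
    have he : 1 - ((N - I*(1 + 1/(2*x)))/(N - I))⁻¹ = -(I/(2*x*(N - I) - I)) := by
      rw [inv_div]
      have hda : N - I*(1+1/(2*x)) = (2*x*(N-I) - I)/(2*x) := by
        field_simp; ring
      rw [hda, div_div_eq_mul_div]
      rw [← neg_div, eq_div_iff hd0.ne', sub_mul, div_mul_cancel₀ _ hd0.ne']
      ring
    linarith [he, h]
  have hT0 : 0 < (1 + 1/x) * I * (M/N) + k * x := by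
    have : 0 ≤ (1 + 1/x) * I * (M/N) := by positivity
    nlinarith
  have s1 : ((1 + 1/x) * I * (M/N) + k * x) * (1/(2*x+1))
      ≤ ((1 + 1/x) * I * (M/N) + k * x) * Real.log (1 + 1/(2*x)) :=
    mul_le_mul_of_nonneg_left hL1 (le_of_lt hT0)
  have s2 : (M - ((1 + 1/x) * I * (M/N) + k * x)) * (-(I/(2*x*(N - I) - I)))
      ≤ (M - ((1 + 1/x) * I * (M/N) + k * x)) * Real.log ((N - I*(1 + 1/(2*x)))/(N - I)) :=
    mul_le_mul_of_nonneg_left hL2 (by linarith)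
  have hMT : M - ((1 + 1/x) * I * (M/N) + k * x) = (M/N)*(N - I - I/x) - k*x := by
    field_simp
    ring
  have hkx3 : k/3 ≤ (k*x)/(2*x+1) := by
    rw [div_le_div_iff₀ (by norm_num) (by linarith)]
    nlinarith
  have hstep : (((M/N)*(N - I - I/x) - k*x) * I) / (2*x*(N - I) - I)
      ≤ ((1 + 1/x) * I * (M/N)) / (2*x+1) := by
    rw [div_le_div_iff₀ hd0 (by linarith)]
    have hkx0 : 0 < k * x := by nlinarith
    have expand : (1 + 1/x) * I * (M/N) * (2*x*(N - I) - I)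
        - ((M/N)*(N - I - I/x) - k*x) * I * (2*x+1)
        = M*I + k*x*I*(2*x+1) := by
      field_simp
      ring
    nlinarith [mul_pos hM hI0, mul_nonneg (mul_nonneg hkx0.le hI0.le) (show (0:ℝ) ≤ 2*x+1 by linarith)]
  have e1 : ((1 + 1/x) * I * (M/N) + k * x) * (1/(2*x+1))
      = ((1 + 1/x) * I * (M/N))/(2*x+1) + (k*x)/(2*x+1) := by ring
  have e2 : (M - ((1 + 1/x) * I * (M/N) + k * x)) * (-(I/(2*x*(N - I) - I)))
      = -((((M/N)*(N - I - I/x) - k*x) * I) / (2*x*(N - I) - I)) := by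
    rw [hMT]; ring
  linarith [s1, s2]

lemma log_two_le : Real.log 2 ≤ 0.6931471808 := le_of_lt Real.log_two_lt_d9

set_option maxHeartbeats 1000000 in
lemma fiber_ineq {x k : ℝ} {n m i s q : ℕ} (hx : 1 < x) (hk : 1 ≤ k)
    (hi : 1 ≤ i) (hsq : s + q = m)
    (hTs : (1 + 1/x) * i * ((m:ℝ)/n) + k * x ≤ (s:ℝ))
    (hm : 0 < m) (hn : 0 < n) :
    (2:ℝ) ^ ((1/4 : ℝ) * k) ≤ (1 + 1/(2*x))^s * (((n:ℝ) - i*(1 + 1/(2*x)))/((n:ℝ) - i))^q := by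
  have hx0 : (0:ℝ) < x := by linarith
  have hM : (0:ℝ) < m := by exact_mod_cast hm
  have hN : (0:ℝ) < n := by exact_mod_cast hn
  have hI : (1:ℝ) ≤ i := by exact_mod_cast hi
  have hI0 : (0:ℝ) < i := by linarith
  have hsm : s ≤ m := by omega
  have hsm' : (s:ℝ) ≤ m := by exact_mod_cast hsm
  have hTm : (1 + 1/x) * i * ((m:ℝ)/n) + k * x ≤ (m:ℝ) := hTs.trans hsm'
  have key := key_ineq hx hk hI hN hM hTm
  have hixn : (i:ℝ) * (x+1) < n * x := ixn_bound hx hk hM hN (le_of_lt hI0) hTm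
  have hIN : (i:ℝ) < n := by nlinarith
  have hw1 : (1:ℝ) < 1 + 1/(2*x) := by
    have : 0 < 1/(2*x) := by positivity
    linarith
  have hAnum : 0 < (n:ℝ) - i*(1 + 1/(2*x)) := by
    have h1 : (i:ℝ) < x * (n - i) := by nlinarith
    have h2 : (i:ℝ)/(2*x) < ((n:ℝ) - i)/2 := by
      rw [div_lt_div_iff₀ (by positivity) (by norm_num)]
      nlinarith
    have h3 : (i:ℝ) * (1 + 1/(2*x)) = i + i/(2*x) := by ring
    rw [h3]; linarith
  have hA0 : 0 < ((n:ℝ) - i*(1 + 1/(2*x)))/((n:ℝ) - i) := div_pos hAnum (by linarith)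
  have hA1 : ((n:ℝ) - i*(1 + 1/(2*x)))/((n:ℝ) - i) ≤ 1 := by
    rw [div_le_one (by linarith)]
    nlinarith
  have hLw : 0 ≤ Real.log (1 + 1/(2*x)) := Real.log_nonneg hw1.le
  have hLA : Real.log (((n:ℝ) - i*(1 + 1/(2*x)))/((n:ℝ) - i)) ≤ 0 :=
    Real.log_nonpos hA0.le hA1
  have hq : (q:ℝ) = (m:ℝ) - s := by
    have : (s:ℝ) + q = m := by exact_mod_cast hsq
    linarith
  -- compare T-weighted with s-weighted
  have step2 : ((1 + 1/x) * i * ((m:ℝ)/n) + k * x) * Real.log (1 + 1/(2*x))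
      + ((m:ℝ) - ((1 + 1/x) * i * ((m:ℝ)/n) + k * x)) * Real.log (((n:ℝ) - i*(1 + 1/(2*x)))/((n:ℝ) - i))
      ≤ (s:ℝ) * Real.log (1 + 1/(2*x)) + (q:ℝ) * Real.log (((n:ℝ) - i*(1 + 1/(2*x)))/((n:ℝ) - i)) := by
    have e : (s:ℝ) * Real.log (1 + 1/(2*x)) + (q:ℝ) * Real.log (((n:ℝ) - i*(1 + 1/(2*x)))/((n:ℝ) - i))
        - (((1 + 1/x) * i * ((m:ℝ)/n) + k * x) * Real.log (1 + 1/(2*x))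
          + ((m:ℝ) - ((1 + 1/x) * i * ((m:ℝ)/n) + k * x)) * Real.log (((n:ℝ) - i*(1 + 1/(2*x)))/((n:ℝ) - i)))
        = ((s:ℝ) - ((1 + 1/x) * i * ((m:ℝ)/n) + k * x))
          * (Real.log (1 + 1/(2*x)) - Real.log (((n:ℝ) - i*(1 + 1/(2*x)))/((n:ℝ) - i))) := by
      rw [hq]; ring
    have hnn : 0 ≤ ((s:ℝ) - ((1 + 1/x) * i * ((m:ℝ)/n) + k * x))
        * (Real.log (1 + 1/(2*x)) - Real.log (((n:ℝ) - i*(1 + 1/(2*x)))/((n:ℝ) - i))) :=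
      mul_nonneg (by linarith) (by linarith)
    linarith
  have hk3 : (1/4 : ℝ) * k * Real.log 2 ≤ k/3 := by
    nlinarith [log_two_le, Real.log_nonneg (by norm_num : (1:ℝ) ≤ 2)]
  have hlog : Real.log ((2:ℝ) ^ ((1/4 : ℝ) * k))
      ≤ Real.log ((1 + 1/(2*x))^s * (((n:ℝ) - i*(1 + 1/(2*x)))/((n:ℝ) - i))^q) := by
    rw [Real.log_rpow (by norm_num : (0:ℝ) < 2),
      Real.log_mul (pow_ne_zero _ (by linarith)) (pow_ne_zero _ hA0.ne'),
      Real.log_pow, Real.log_pow]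
    linarith
  have h2pos : (0:ℝ) < (2:ℝ) ^ ((1/4 : ℝ) * k) := Real.rpow_pos_of_pos (by norm_num) _
  have hppos : (0:ℝ) < (1 + 1/(2*x))^s * (((n:ℝ) - i*(1 + 1/(2*x)))/((n:ℝ) - i))^q :=
    mul_pos (pow_pos (by linarith) _) (pow_pos hA0 _)
  exact (Real.log_le_log_iff h2pos hppos).mp hlog

set_option maxHeartbeats 1000000 in
lemma main_count (n m : ℕ) (hn : 0 < n) (hm : 0 < m) (x k : ℝ) (hx : 1 < x) (hk : 1 ≤ k) :
    ((Finset.univ.filter (fun ω : Fin m → Fin n =>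
        ∃ i : ℕ, 1 ≤ i ∧ i ≤ n ∧
          (1 + 1 / x) * i * ((m : ℝ) / n) + k * x ≤ ballsInPrefix ω i)).card : ℝ)
      ≤ (2 : ℝ) ^ (-((1/4 : ℝ) * k)) * (n : ℝ) ^ m := by
  have hx0 : (0:ℝ) < x := by linarith
  have hN : (0:ℝ) < n := by exact_mod_cast hn
  have hM : (0:ℝ) < m := by exact_mod_cast hm
  set w1 : ℝ := 1 + 1/(2*x) with hw1def
  have hw1gt : (1:ℝ) < w1 := by
    have h : 0 < 1/(2*x) := by positivity
    rw [hw1def]; linarith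
  set i₀ : ℕ := ⌈(n:ℝ)*x/(x+1)⌉₊ - 1 with hi₀def
  have hvpos : 0 < (n:ℝ)*x/(x+1) := by positivity
  have hceil1 : ((⌈(n:ℝ)*x/(x+1)⌉₊ : ℕ) : ℝ) < (n:ℝ)*x/(x+1) + 1 :=
    Nat.ceil_lt_add_one (le_of_lt hvpos)
  have hi₀v : (i₀ : ℝ) ≤ (n:ℝ)*x/(x+1) := by
    rcases Nat.eq_zero_or_pos ⌈(n:ℝ)*x/(x+1)⌉₊ with h0 | h1
    · rw [hi₀def, h0]
      simp
      positivity
    · rw [hi₀def, Nat.cast_sub h1]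
      push_cast
      linarith
  have hi₀n : i₀ < n := by
    have hvn : (n:ℝ)*x/(x+1) < n := by
      rw [div_lt_iff₀ (by linarith : (0:ℝ) < x+1)]
      nlinarith
    have : (i₀:ℝ) < n := lt_of_le_of_lt hi₀v hvn
    exact_mod_cast this
  have hi₀N : (i₀:ℝ) < n := by exact_mod_cast hi₀n
  set γ : ℝ := ((n:ℝ) - i₀*w1)/((n:ℝ) - i₀) with hγdef
  have hγnum : 0 ≤ (n:ℝ) - i₀*w1 := by
    have h1 : (i₀:ℝ)*w1 ≤ ((n:ℝ)*x/(x+1))*w1 :=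
      mul_le_mul_of_nonneg_right hi₀v (by rw [hw1def]; positivity)
    have h2 : ((n:ℝ)*x/(x+1))*w1 = (n:ℝ)*(2*x+1)/(2*(x+1)) := by
      rw [hw1def]; field_simp
    have h3 : (n:ℝ)*(2*x+1)/(2*(x+1)) ≤ n := by
      rw [div_le_iff₀ (by linarith : (0:ℝ) < 2*(x+1))]
      nlinarith
    have h4 : (i₀:ℝ)*w1 ≤ n := le_trans (h2 ▸ h1) h3
    linarith
  have hγ0 : 0 ≤ γ := div_nonneg hγnum (by linarith)
  set w : Fin n → ℝ := fun j => if (j:ℕ) < i₀ then w1 else γ with hwdef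
  have hwnn : ∀ j, 0 ≤ w j := by
    intro j
    rw [hwdef]
    dsimp only
    split_ifs
    · linarith
    · exact hγ0
  have hsum_lt : ∀ i ≤ i₀, ∑ j ∈ Finset.univ.filter (fun j : Fin n => (j:ℕ) < i), w j = i * w1 := by
    intro i hi
    have hcongr : ∀ j ∈ Finset.univ.filter (fun j : Fin n => (j:ℕ) < i), w j = w1 := by
      intro j hj
      have hji : (j:ℕ) < i := (Finset.mem_filter.mp hj).2
      rw [hwdef]
      dsimp only
      rw [if_pos (by omega)]
    rw [Finset.sum_congr rfl hcongr, Finset.sum_const,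
      card_filter_val_lt (le_trans hi (le_of_lt hi₀n)), nsmul_eq_mul]
  have hcard_not : ∀ i ≤ n, (Finset.univ.filter (fun j : Fin n => ¬ (j:ℕ) < i)).card = n - i := by
    intro i hi
    have h := Finset.card_filter_add_card_filter_not
      (s := (Finset.univ : Finset (Fin n))) (fun j : Fin n => (j:ℕ) < i)
    rw [card_filter_val_lt hi, Finset.card_univ, Fintype.card_fin] at h
    omega
  have hsumw : ∑ j, w j = (n:ℝ) := by
    rw [← Finset.sum_filter_add_sum_filter_not Finset.univ (fun j : Fin n => (j:ℕ) < i₀)]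
    rw [hsum_lt i₀ le_rfl]
    have hcongr : ∀ j ∈ Finset.univ.filter (fun j : Fin n => ¬(j:ℕ) < i₀), w j = γ := by
      intro j hj
      have hji := (Finset.mem_filter.mp hj).2
      rw [hwdef]
      dsimp only
      rw [if_neg hji]
    rw [Finset.sum_congr rfl hcongr, Finset.sum_const, hcard_not i₀ (le_of_lt hi₀n), nsmul_eq_mul]
    have hc : ((n - i₀ : ℕ) : ℝ) = (n:ℝ) - i₀ := by
      rw [Nat.cast_sub (le_of_lt hi₀n)]
    rw [hc, hγdef, mul_comm ((n:ℝ) - i₀), div_mul_cancel₀ _ (by linarith : (n:ℝ) - i₀ ≠ 0)]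
    ring
  have htot : ∑ ω : Fin m → Fin n, (∏ b, w (ω b)) = (n:ℝ)^m := by
    rw [← Fintype.piFinset_univ,
      ← Finset.prod_univ_sum (fun _ : Fin m => (Finset.univ : Finset (Fin n))) (fun _ j => w j)]
    rw [Finset.prod_congr rfl (fun b _ => hsumw), Finset.prod_const, Finset.card_univ,
      Fintype.card_fin]
  set Bad := Finset.univ.filter (fun ω : Fin m → Fin n =>
      ∃ i : ℕ, 1 ≤ i ∧ i ≤ n ∧
        (1 + 1 / x) * i * ((m : ℝ) / n) + k * x ≤ ballsInPrefix ω i) with hBaddef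
  have hfiber : ∀ p ∈ Bad.image (keyfun n m x k),
      (2:ℝ)^((1/4:ℝ)*k) * ((Bad.filter (fun ω => keyfun n m x k ω = p)).card : ℝ)
        ≤ ∑ ω ∈ Bad.filter (fun ω => keyfun n m x k ω = p), (∏ b, w (ω b)) := by
    intro p hp
    obtain ⟨ω₀, hω₀B, hgω₀⟩ := Finset.mem_image.mp hp
    have hex : ∃ i : ℕ, 1 ≤ i ∧ i ≤ n ∧
        (1 + 1 / x) * i * ((m : ℝ) / n) + k * x ≤ ballsInPrefix ω₀ i := by
      have h := Finset.mem_filter.mp (hBaddef ▸ hω₀B)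
      exact h.2
    have hfeq := fiber_eq_piFinset x k p ω₀ hex hgω₀
    have hfb : firstBad n m x k ω₀ = Nat.find hex := by unfold firstBad; rw [dif_pos hex]
    have hp1 : p.1 = Nat.find hex := by rw [← hgω₀]; exact hfb
    obtain ⟨hi1, hiN, hsi⟩ := Nat.find_spec hex
    rw [← hp1] at hi1 hiN hsi
    have hp2 : ∀ b, p.2 b = if (ω₀ b : ℕ) < p.1 then (ω₀ b : ℕ) else n := by
      intro b
      conv_lhs => rw [← hgω₀]
      simp only [keyfun]
      rw [hfb, ← hp1]
    have hsm : ballsInPrefix ω₀ p.1 ≤ m :=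
      le_trans (Finset.card_filter_le _ _) (by simp)
    have hTm : (1 + 1 / x) * p.1 * ((m : ℝ) / n) + k * x ≤ (m:ℝ) :=
      le_trans hsi (by exact_mod_cast hsm)
    have hixn : (p.1:ℝ)*(x+1) < (n:ℝ)*x := ixn_bound hx hk hM hN (by positivity) hTm
    have hii₀ : p.1 ≤ i₀ := by
      have h1 : (p.1:ℝ) < (n:ℝ)*x/(x+1) := by
        rw [lt_div_iff₀ (by linarith : (0:ℝ) < x+1)]
        linarith
      have h2 : p.1 < ⌈(n:ℝ)*x/(x+1)⌉₊ := Nat.lt_ceil.mpr h1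
      omega
    have hiltn : p.1 < n := lt_of_le_of_lt hii₀ hi₀n
    set s := ballsInPrefix ω₀ p.1 with hsdef
    set q := m - s with hqdef
    have hsq : s + q = m := by omega
    set R := ∑ j ∈ Finset.univ.filter (fun j : Fin n => ¬ (j:ℕ) < p.1), w j with hRdef
    have htb_sum : ∀ b : Fin m,
        ∑ j ∈ Finset.univ.filter
          (fun j : Fin n => (if (j:ℕ) < p.1 then (j:ℕ) else n) = p.2 b), w j
        = if (ω₀ b : ℕ) < p.1 then w1 else R := by
      intro b
      by_cases hb : (ω₀ b : ℕ) < p.1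
      · rw [if_pos hb]
        have hpb : p.2 b = ((ω₀ b : ℕ)) := by rw [hp2 b, if_pos hb]
        rw [hpb, tb_singleton hiN (ω₀ b) hb, Finset.sum_singleton]
        rw [hwdef]
        dsimp only
        rw [if_pos (by omega : (ω₀ b : ℕ) < i₀)]
      · rw [if_neg hb]
        have hpb : p.2 b = n := by rw [hp2 b, if_neg hb]
        rw [hpb, tb_notlt hiN]
    have htb_card : ∀ b : Fin m,
        (Finset.univ.filter
          (fun j : Fin n => (if (j:ℕ) < p.1 then (j:ℕ) else n) = p.2 b)).card
        = if (ω₀ b : ℕ) < p.1 then 1 else (n - p.1) := by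
      intro b
      by_cases hb : (ω₀ b : ℕ) < p.1
      · rw [if_pos hb]
        have hpb : p.2 b = ((ω₀ b : ℕ)) := by rw [hp2 b, if_pos hb]
        rw [hpb, tb_singleton hiN (ω₀ b) hb, Finset.card_singleton]
      · rw [if_neg hb]
        have hpb : p.2 b = n := by rw [hp2 b, if_neg hb]
        rw [hpb, tb_notlt hiN, hcard_not p.1 hiN]
    have hscard : (Finset.univ.filter (fun b : Fin m => (ω₀ b : ℕ) < p.1)).card = s := rfl
    have hqcard : (Finset.univ.filter (fun b : Fin m => ¬ (ω₀ b : ℕ) < p.1)).card = q := by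
      have h := Finset.card_filter_add_card_filter_not
        (s := (Finset.univ : Finset (Fin m))) (fun b : Fin m => (ω₀ b : ℕ) < p.1)
      rw [hscard, Finset.card_univ, Fintype.card_fin] at h
      omega
    have hsumeq : ∑ ω ∈ Fintype.piFinset (fun b =>
          Finset.univ.filter
            (fun j : Fin n => (if (j:ℕ) < p.1 then (j:ℕ) else n) = p.2 b)),
        (∏ b, w (ω b)) = w1^s * R^q := by
      rw [← Finset.prod_univ_sum]
      rw [Finset.prod_congr rfl (fun b _ => htb_sum b), Finset.prod_ite,
        Finset.prod_const, Finset.prod_const, hscard, hqcard]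
    have hcardeq : (Fintype.piFinset (fun b =>
          Finset.univ.filter
            (fun j : Fin n => (if (j:ℕ) < p.1 then (j:ℕ) else n) = p.2 b))).card
        = (n - p.1)^q := by
      rw [Fintype.card_piFinset]
      rw [Finset.prod_congr rfl (fun b _ => htb_card b), Finset.prod_ite,
        Finset.prod_const, Finset.prod_const, hscard, hqcard, one_pow, one_mul]
    have hR : R = (n:ℝ) - p.1 * w1 := by
      have h := hsumw
      rw [← Finset.sum_filter_add_sum_filter_not Finset.univ
        (fun j : Fin n => (j:ℕ) < p.1), hsum_lt p.1 hii₀, ← hRdef] at h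
      linarith
    have hcpos : (0:ℝ) < (n:ℝ) - p.1 := by
      have : (p.1:ℝ) < n := by exact_mod_cast hiltn
      linarith
    have hsi' : (1 + 1/x) * p.1 * ((m:ℝ)/n) + k * x ≤ (s:ℝ) := hsi
    have key := fiber_ineq (n := n) (m := m) (i := p.1) (s := s) (q := q)
      hx hk hi1 hsq hsi' hm hn
    rw [hBaddef, hfeq, hsumeq, hcardeq]
    have hcastc : ((n - p.1 : ℕ) : ℝ) = (n:ℝ) - p.1 := by
      rw [Nat.cast_sub (le_of_lt hiltn)]
    have hAc : (((n:ℝ) - p.1*w1)/((n:ℝ) - p.1)) * ((n:ℝ) - p.1) = R := by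
      rw [div_mul_cancel₀ _ (ne_of_gt hcpos), hR]
    calc (2:ℝ)^((1/4:ℝ)*k) * (((n - p.1)^q : ℕ) : ℝ)
        = (2:ℝ)^((1/4:ℝ)*k) * ((n:ℝ) - p.1)^q := by
          rw [Nat.cast_pow, hcastc]
      _ ≤ (w1^s * (((n:ℝ) - p.1*w1)/((n:ℝ) - p.1))^q) * ((n:ℝ) - p.1)^q := by
          apply mul_le_mul_of_nonneg_right _ (pow_nonneg hcpos.le q)
          rw [hw1def]
          exact key
      _ = w1^s * ((((n:ℝ) - p.1*w1)/((n:ℝ) - p.1)) * ((n:ℝ) - p.1))^q := by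
          rw [mul_pow]; ring
      _ = w1^s * R^q := by rw [hAc]
  -- assemble
  have hpos2 : (0:ℝ) < (2:ℝ)^((1/4:ℝ)*k) := Real.rpow_pos_of_pos (by norm_num) _
  have hcount : (2:ℝ)^((1/4:ℝ)*k) * (Bad.card : ℝ) ≤ (n:ℝ)^m := by
    have h1 : (Bad.card : ℝ) = ∑ p ∈ Bad.image (keyfun n m x k),
        ((Bad.filter (fun ω => keyfun n m x k ω = p)).card : ℝ) := by
      rw [Finset.card_eq_sum_card_image (keyfun n m x k) Bad]
      push_cast
      rfl
    have h2 : ∑ p ∈ Bad.image (keyfun n m x k),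
        (∑ ω ∈ Bad.filter (fun ω => keyfun n m x k ω = p), (∏ b, w (ω b)))
        = ∑ ω ∈ Bad, (∏ b, w (ω b)) :=
      Finset.sum_fiberwise_of_maps_to (fun ω hω => Finset.mem_image_of_mem _ hω) _
    have h3 : ∑ ω ∈ Bad, (∏ b, w (ω b)) ≤ ∑ ω : Fin m → Fin n, (∏ b, w (ω b)) :=
      Finset.sum_le_sum_of_subset_of_nonneg (Finset.subset_univ _)
        (fun ω _ _ => Finset.prod_nonneg (fun b _ => hwnn _))
    calc (2:ℝ)^((1/4:ℝ)*k) * (Bad.card : ℝ)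
        = ∑ p ∈ Bad.image (keyfun n m x k),
            (2:ℝ)^((1/4:ℝ)*k) * ((Bad.filter (fun ω => keyfun n m x k ω = p)).card : ℝ) := by
          rw [h1, Finset.mul_sum]
      _ ≤ ∑ p ∈ Bad.image (keyfun n m x k),
            (∑ ω ∈ Bad.filter (fun ω => keyfun n m x k ω = p), (∏ b, w (ω b))) :=
          Finset.sum_le_sum hfiber
      _ = ∑ ω ∈ Bad, (∏ b, w (ω b)) := h2
      _ ≤ ∑ ω : Fin m → Fin n, (∏ b, w (ω b)) := h3
      _ = (n:ℝ)^m := htot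
  rw [Real.rpow_neg (by norm_num : (0:ℝ) ≤ 2), inv_mul_eq_div, le_div_iff₀ hpos2]
  linarith [hcount]

/-- Place `m = Θ(n)` balls i.i.d. uniformly into `n` bins, `μ = m/n`.
For any `x > 1` and `k ≥ 1`, with probability `1 - 2^{-Ω(k)}`, there is no `i ∈ [n]`
such that the first `i` bins contain at least `(1 + 1/x) i μ + k x` balls. -/
theorem stmt1 (c₁ c₂ : ℝ) (hc₁ : 0 < c₁) (hc₂ : 0 < c₂) :
    ∃ c₃ : ℝ, 0 < c₃ ∧
      ∀ (n m : ℕ), 0 < n → c₁ * n ≤ m → (m : ℝ) ≤ c₂ * n →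
      ∀ (x k : ℝ), 1 < x → 1 ≤ k →
      ((Finset.univ.filter (fun ω : Fin m → Fin n =>
          ∃ i : ℕ, 1 ≤ i ∧ i ≤ n ∧
            (1 + 1 / x) * i * ((m : ℝ) / n) + k * x ≤ ballsInPrefix ω i)).card : ℝ)
        ≤ (2 : ℝ) ^ (-(c₃ * k)) * (n : ℝ) ^ m := by
  refine ⟨1/4, by norm_num, ?_⟩
  intro n m hn hm1 hm2 x k hx hk
  have hm : 0 < m := by
    have h0 : (0:ℝ) < c₁ * n := mul_pos hc₁ (by exact_mod_cast hn)
    have h1 : (0:ℝ) < m := lt_of_lt_of_le h0 hm1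
    exact_mod_cast h1
  exact main_count n m hn hm x k hx hk
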